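/- Let c ≥ 1/2 and K > 0. There exists a constant C = C(c, K) such that for every sequence a = (a_n)_{n≥0} of complex numbers with ‖a‖_{c,K} < ∞, all series occurring in the definition of T a = D³(H(D a)) converge absolutely, and ‖T a‖_{c,K} ≤ C ‖a‖_{c,K}. -/

import Mathlib

open MeasureTheory Real Filter Finset

/-- `‖a‖_{c,K,n} = (n/K)^{c n} |a_n|` (with `(0/K)^0 = 1`, which is `Real.rpow`'s convention). -/
noncomputable def seqNorm (c K : ℝ) (a : ℕ → ℂ) (n : ℕ) : ℝ :=
  ((n : ℝ) / K) ^ (c * n) * ‖a n‖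

/-- The operator `D`: `(D a)_n = (n+2) Σ_{m > n, m − n odd} a_m`, i.e.
`(D a)_n = (n+2) Σ_{j≥0} a_{n+2j+1}` (interpreted via `tsum`). -/
noncomputable def Dop (a : ℕ → ℂ) (n : ℕ) : ℂ :=
  ((n : ℂ) + 2) * ∑' j : ℕ, a (n + 2 * j + 1)

/-- The operator `H`: `(H a)_n = a_n / ((n+2)² − 1)`. -/
noncomputable def Hop (a : ℕ → ℂ) (n : ℕ) : ℂ :=
  a n / (((n : ℂ) + 2) ^ 2 - 1)

/-- The operator `T = D³ ∘ H ∘ D`. -/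
noncomputable def Tp (a : ℕ → ℂ) : ℕ → ℂ :=
  Dop (Dop (Dop (Hop (Dop a))))

namespace TpAux

lemma bounded_of_eventually {g : ℕ → ℝ} (N : ℕ) (B : ℝ) (hB : 0 ≤ B)
    (h : ∀ n, N ≤ n → g n ≤ B) :
    ∃ C : ℝ, 0 ≤ C ∧ ∀ n, g n ≤ C := by
  refine ⟨B + ∑ k ∈ Finset.range N, |g k|, by positivity, fun n => ?_⟩
  rcases lt_or_ge n N with hn | hn
  · calc g n ≤ |g n| := le_abs_self _
      _ ≤ ∑ k ∈ Finset.range N, |g k| :=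
        Finset.single_le_sum (f := fun k => |g k|) (fun k _ => abs_nonneg _)
          (Finset.mem_range.2 hn)
      _ ≤ B + ∑ k ∈ Finset.range N, |g k| := le_add_of_nonneg_left hB
  · exact le_trans (h n hn)
      (le_add_of_nonneg_right (Finset.sum_nonneg fun k _ => abs_nonneg _))

lemma geom_master {f : ℕ → ℝ} (hf : ∀ m, 0 < f m) (N : ℕ)
    (hN : ∀ m, N ≤ m → f (m + 2) ≤ f m / 2) :
    (∀ n, Summable fun j => f (n + 2 * j)) ∧
    ∃ C : ℝ, 0 ≤ C ∧ ∀ n, ∑' j, f (n + 2 * j) ≤ C * f n := by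
  have key : ∀ n, N ≤ n → ∀ j, f (n + 2 * j) ≤ (1/2)^j * f n := by
    intro n hn j
    induction j with
    | zero => simp
    | succ j ih =>
      have h1 : f (n + 2*j + 2) ≤ f (n + 2*j) / 2 := hN _ (by omega)
      have he : n + 2*(j+1) = n + 2*j + 2 := by ring
      rw [he]
      calc f (n + 2*j + 2) ≤ f (n+2*j)/2 := h1
        _ ≤ ((1/2)^j * f n)/2 := by linarith
        _ = (1/2)^(j+1) * f n := by ring
  have hsumN : ∀ n, N ≤ n → Summable fun j => f (n + 2*j) := by
    intro n hn
    exact Summable.of_nonneg_of_le (fun j => (hf _).le) (key n hn)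
      ((summable_geometric_of_lt_one (by norm_num) (by norm_num)).mul_right (f n))
  have hsum : ∀ n, Summable fun j => f (n + 2*j) := by
    intro n
    rw [← summable_nat_add_iff N]
    exact (hsumN (n + 2*N) (by omega)).congr (fun j => by congr 1; omega)
  refine ⟨hsum, ?_⟩
  have hev : ∀ n, N ≤ n → (∑' j, f (n + 2*j)) / f n ≤ 2 := by
    intro n hn
    rw [div_le_iff₀ (hf n)]
    calc ∑' j, f (n + 2*j) ≤ ∑' j : ℕ, (1/2:ℝ)^j * f n :=
          Summable.tsum_le_tsum (key n hn) (hsum n)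
            ((summable_geometric_of_lt_one (by norm_num) (by norm_num)).mul_right _)
      _ = (∑' j : ℕ, (1/2:ℝ)^j) * f n := tsum_mul_right
      _ = 2 * f n := by rw [tsum_geometric_two]
  obtain ⟨C, hC0, hC⟩ := bounded_of_eventually N 2 (by norm_num) hev
  refine ⟨C, hC0, fun n => ?_⟩
  have h := hC n
  rw [div_le_iff₀ (hf n)] at h
  exact h

lemma sum_shift {f : ℕ → ℝ} (h : ∀ n, Summable fun j => f (n + 2*j)) (n s : ℕ) :
    Summable fun j => f (n + 2*j + s) :=
  (h (n + s)).congr (fun j => by congr 1; omega)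

lemma tsum_shift (f : ℕ → ℝ) (n s : ℕ) :
    ∑' j, f (n + 2*j + s) = ∑' j, f ((n + s) + 2*j) :=
  tsum_congr fun j => by congr 1; omega

noncomputable def wt (c K : ℝ) (m : ℕ) : ℝ := ((m : ℝ) / K) ^ (c * m)

lemma wt_pos {c K : ℝ} (hK : 0 < K) : ∀ m, 0 < wt c K m := by
  intro m
  cases m with
  | zero => simp [wt]
  | succ k => exact Real.rpow_pos_of_pos (by positivity) _

lemma wt_shift {c K : ℝ} (hc : 0 ≤ c) (hK : 0 < K) (d m : ℕ) (hd : 0 < d) :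
    (((m : ℝ) + d) / K) ^ (c * d) * wt c K m ≤ wt c K (m + d) := by
  unfold wt
  push_cast
  rw [show c * ((m : ℝ) + d) = c * d + c * m by ring,
    Real.rpow_add (by positivity)]
  have h1 : ((m : ℝ) / K) ^ (c * m) ≤ (((m : ℝ) + d) / K) ^ (c * m) := by
    apply Real.rpow_le_rpow (by positivity) _ (by positivity)
    gcongr
    linarith [Nat.cast_nonneg (α := ℝ) d]
  have h2 : (0:ℝ) ≤ (((m : ℝ) + d) / K) ^ (c * d) := Real.rpow_nonneg (by positivity) _
  exact mul_le_mul_of_nonneg_left h1 h2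

lemma wt_quad {c K : ℝ} (hc : 1/2 ≤ c) (hK : 0 < K) :
    ∀ m, Nat.ceil (4*K) ≤ m → 4 * wt c K m ≤ wt c K (m + 2) := by
  intro m hm
  have hc0 : (0:ℝ) ≤ c := by linarith
  have hKm : 4 * K ≤ (m : ℝ) := by
    calc 4*K ≤ (⌈4*K⌉₊ : ℝ) := Nat.le_ceil _
      _ ≤ m := Nat.cast_le.2 hm
  have hbase : (4:ℝ) ≤ ((m : ℝ) + 2) / K := by
    rw [le_div_iff₀ hK]; linarith
  have h4 : (4:ℝ) ≤ (((m : ℝ) + 2) / K) ^ (c * 2) := by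
    calc (4:ℝ) = (4:ℝ) ^ (1:ℝ) := by rw [Real.rpow_one]
      _ ≤ (4:ℝ) ^ (c * 2) := by
          apply Real.rpow_le_rpow_of_exponent_le (by norm_num); linarith
      _ ≤ (((m : ℝ) + 2) / K) ^ (c * 2) :=
          Real.rpow_le_rpow (by norm_num) hbase (by linarith)
  calc 4 * wt c K m ≤ (((m : ℝ) + 2) / K) ^ (c * 2) * wt c K m := by
        have := wt_pos (c := c) hK m
        nlinarith
    _ ≤ wt c K (m + 2) := by
        have := wt_shift hc0 hK 2 m (by norm_num)
        push_cast at this ⊢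
        exact this

lemma wt_final {c K : ℝ} (hc : 1/2 ≤ c) (hK : 0 < K) :
    ∀ n, Nat.ceil (4*K) ≤ n →
      ((n:ℝ)+2) * ((n:ℝ)+3) * wt c K n ≤ K^2 * wt c K (n + 4) := by
  intro n hn
  have hc0 : (0:ℝ) ≤ c := by linarith
  have hKn : 4 * K ≤ (n : ℝ) := by
    calc 4*K ≤ (⌈4*K⌉₊ : ℝ) := Nat.le_ceil _
      _ ≤ n := Nat.cast_le.2 hn
  have hbase : (1:ℝ) ≤ ((n : ℝ) + 4) / K := by
    rw [le_div_iff₀ hK]; linarith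
  have hw := wt_pos (c := c) hK n
  have h2 : (((n:ℝ)+4)/K) ^ (2:ℝ) ≤ (((n:ℝ)+4)/K) ^ (c * 4) :=
    Real.rpow_le_rpow_of_exponent_le hbase (by linarith)
  have hsq : (((n:ℝ)+4)/K) ^ (2:ℝ) = ((n:ℝ)+4)^2 / K^2 := by
    rw [Real.rpow_two, div_pow]
  have hshift := wt_shift (c := c) (K := K) hc0 hK 4 n (by norm_num)
  push_cast at hshift
  have hK2 : (0:ℝ) < K^2 := by positivity
  calc ((n:ℝ)+2) * ((n:ℝ)+3) * wt c K n ≤ ((n:ℝ)+4)^2 * wt c K n := by nlinarith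
    _ = K^2 * (((n:ℝ)+4)^2 / K^2 * wt c K n) := by field_simp
    _ ≤ K^2 * ((((n:ℝ)+4)/K) ^ (c*4) * wt c K n) := by
        rw [← hsq]
        exact mul_le_mul_of_nonneg_left (mul_le_mul_of_nonneg_right h2 hw.le) hK2.le
    _ ≤ K^2 * wt c K (n + 4) := mul_le_mul_of_nonneg_left hshift hK2.le

lemma Dop_est {b : ℕ → ℂ} {g : ℕ → ℝ}
    (hb : ∀ m, ‖b m‖ ≤ g m)
    (hsum : ∀ n, Summable fun j => g (n + 2 * j + 1))
    {t : ℕ → ℝ} (ht : ∀ n, ∑' j, g (n + 2 * j + 1) ≤ t n) :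
    (∀ n, Summable fun j => b (n + 2 * j + 1)) ∧
    ∀ n, ‖Dop b n‖ ≤ ((n : ℝ) + 2) * t n := by
  have hnorm : ∀ n, Summable fun j => ‖b (n + 2 * j + 1)‖ := fun n =>
    Summable.of_nonneg_of_le (fun j => (norm_nonneg _)) (fun j => hb _) (hsum n)
  have hbsum : ∀ n, Summable fun j => b (n + 2 * j + 1) := fun n =>
    Summable.of_norm (by simpa using hnorm n)
  refine ⟨hbsum, fun n => ?_⟩
  unfold Dop
  rw [norm_mul]
  have habs2 : ‖(n : ℂ) + 2‖ = (n : ℝ) + 2 := by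
    rw [show ((n : ℂ) + 2) = (((n : ℝ) + 2 : ℝ) : ℂ) by push_cast; ring,
      Complex.norm_real, Real.norm_of_nonneg (by positivity)]
  rw [habs2]
  apply mul_le_mul_of_nonneg_left _ (by positivity)
  calc ‖∑' j : ℕ, b (n + 2 * j + 1)‖
      ≤ ∑' j : ℕ, ‖b (n + 2 * j + 1)‖ := by
        simpa using
          norm_tsum_le_tsum_norm (f := fun j : ℕ => b (n + 2 * j + 1))
            (by simpa using hnorm n)
    _ ≤ ∑' j : ℕ, g (n + 2 * j + 1) := Summable.tsum_le_tsum (fun j => hb _) (hnorm n) (hsum n)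
    _ ≤ t n := ht n

lemma Hop_est {b : ℕ → ℂ} {g : ℕ → ℝ}
    (hb : ∀ m, ‖b m‖ ≤ ((m : ℝ) + 2) * g m) (hg : ∀ m, 0 ≤ g m) :
    ∀ n, ‖Hop b n‖ ≤ g n / ((n : ℝ) + 1) := by
  intro n
  unfold Hop
  rw [norm_div]
  have hden : ‖((n : ℂ) + 2) ^ 2 - 1‖ = ((n : ℝ) + 2) ^ 2 - 1 := by
    have hpos : (0:ℝ) ≤ ((n : ℝ) + 2) ^ 2 - 1 := by nlinarith [Nat.cast_nonneg (α := ℝ) n]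
    rw [show (((n : ℂ) + 2) ^ 2 - 1) = ((((n : ℝ) + 2) ^ 2 - 1 : ℝ) : ℂ) by push_cast; ring,
      Complex.norm_real, Real.norm_of_nonneg hpos]
  rw [hden]
  have hx : (0:ℝ) ≤ (n:ℝ) := Nat.cast_nonneg n
  have hdpos : (0:ℝ) < ((n : ℝ) + 2) ^ 2 - 1 := by nlinarith
  calc ‖b n‖ / (((n : ℝ) + 2) ^ 2 - 1)
      ≤ (((n : ℝ) + 2) * g n) / (((n : ℝ) + 2) ^ 2 - 1) :=
        div_le_div_of_nonneg_right (hb n) hdpos.le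
    _ ≤ g n / ((n : ℝ) + 1) := by
        rw [div_le_div_iff₀ hdpos (by positivity)]
        nlinarith [hg n]

end TpAux

theorem Tp_bound (c K : ℝ) (hc : 1 / 2 ≤ c) (hK : 0 < K) :
    ∃ C : ℝ, ∀ a : ℕ → ℂ, BddAbove (Set.range (seqNorm c K a)) →
      ((∀ n : ℕ, Summable (fun j : ℕ => a (n + 2 * j + 1))) ∧
       (∀ n : ℕ, Summable (fun j : ℕ => Hop (Dop a) (n + 2 * j + 1))) ∧
       (∀ n : ℕ, Summable (fun j : ℕ => Dop (Hop (Dop a)) (n + 2 * j + 1))) ∧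
       (∀ n : ℕ, Summable (fun j : ℕ => Dop (Dop (Hop (Dop a))) (n + 2 * j + 1)))) ∧
      ∀ n : ℕ, seqNorm c K (Tp a) n ≤ C * ⨆ m : ℕ, seqNorm c K a m := by
  classical
  open TpAux in
  set N : ℕ := Nat.ceil (4 * K) with hNdef
  have hwpos : ∀ m, 0 < TpAux.wt c K m := TpAux.wt_pos hK
  have hquad : ∀ m, N ≤ m → 4 * TpAux.wt c K m ≤ TpAux.wt c K (m + 2) :=
    TpAux.wt_quad hc hK
  -- f₀
  set f₀ : ℕ → ℝ := fun m => 1 / TpAux.wt c K m with hf₀def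
  have hf₀pos : ∀ m, 0 < f₀ m := fun m => by
    simp only [hf₀def]; exact one_div_pos.2 (hwpos m)
  have hf₀dec : ∀ m, N ≤ m → f₀ (m + 2) ≤ f₀ m / 2 := by
    intro m hm
    have h := hquad m hm
    have := hwpos m; have := hwpos (m + 2)
    simp only [hf₀def]
    rw [div_div, div_le_div_iff₀ (by linarith) (by linarith)]
    nlinarith
  obtain ⟨hsum₀, C₀, hC₀0, hC₀⟩ := TpAux.geom_master hf₀pos N hf₀dec
  -- f₂
  set f₂ : ℕ → ℝ := fun m => 1 / (((m:ℝ) + 1) * TpAux.wt c K (m + 1)) with hf₂def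
  have hf₂pos : ∀ m, 0 < f₂ m := fun m => by
    have := hwpos (m + 1); simp only [hf₂def]; positivity
  have hf₂dec : ∀ m, N ≤ m → f₂ (m + 2) ≤ f₂ m / 2 := by
    intro m hm
    have h := hquad (m + 1) (by omega)
    have h1 := hwpos (m + 1); have h3 := hwpos (m + 3)
    have hm0 : (0:ℝ) ≤ (m:ℝ) := Nat.cast_nonneg m
    simp only [hf₂def]
    push_cast
    rw [show (m:ℝ) + 2 + 1 = (m:ℝ) + 3 by ring, div_div,
      div_le_div_iff₀ (by positivity) (by positivity)]
    have h' : TpAux.wt c K (m + 1 + 2) = TpAux.wt c K (m + 3) := by norm_num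
    rw [h'] at h
    nlinarith
  obtain ⟨hsum₂, C₂, hC₂0, hC₂⟩ := TpAux.geom_master hf₂pos N hf₂dec
  -- f₄
  set f₄ : ℕ → ℝ := fun m => ((m:ℝ) + 2) / TpAux.wt c K (m + 3) with hf₄def
  have hf₄pos : ∀ m, 0 < f₄ m := fun m => by
    have := hwpos (m + 3); simp only [hf₄def]; positivity
  have hf₄dec : ∀ m, N ≤ m → f₄ (m + 2) ≤ f₄ m / 2 := by
    intro m hm
    have h := hquad (m + 3) (by omega)
    have h3 := hwpos (m + 3); have h5 := hwpos (m + 5)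
    have hm0 : (0:ℝ) ≤ (m:ℝ) := Nat.cast_nonneg m
    simp only [hf₄def]
    push_cast
    rw [show m + 2 + 3 = m + 5 by ring, show (m:ℝ) + 2 + 2 = (m:ℝ) + 4 by ring, div_div,
      div_le_div_iff₀ (by positivity) (by positivity)]
    have h' : TpAux.wt c K (m + 3 + 2) = TpAux.wt c K (m + 5) := by norm_num
    rw [h'] at h
    nlinarith
  obtain ⟨hsum₄, C₄, hC₄0, hC₄⟩ := TpAux.geom_master hf₄pos N hf₄dec
  -- C₅
  obtain ⟨C₅, hC₅0, hC₅⟩ := TpAux.bounded_of_eventually N (K^2) (by positivity)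
    (g := fun n => ((n:ℝ)+2) * ((n:ℝ)+3) * TpAux.wt c K n / TpAux.wt c K (n + 4))
    (fun n hn => by
      rw [div_le_iff₀ (hwpos (n + 4))]
      calc ((n:ℝ)+2) * ((n:ℝ)+3) * TpAux.wt c K n ≤ K^2 * TpAux.wt c K (n + 4) :=
            TpAux.wt_final hc hK n hn
        _ = K^2 * TpAux.wt c K (n + 4) := rfl)
  refine ⟨C₀ * C₂ * C₀ * C₄ * C₅, fun a hbdd => ?_⟩
  set M : ℝ := ⨆ m, seqNorm c K a m with hMdef
  have hM : ∀ m, seqNorm c K a m ≤ M := fun m => le_ciSup hbdd m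
  have hM0 : 0 ≤ M := le_trans (by
    have : (0:ℝ) ≤ seqNorm c K a 0 := by
      unfold seqNorm; positivity
    exact this) (hM 0)
  have ha0 : ∀ m, ‖a m‖ ≤ M * f₀ m := by
    intro m
    have h := hM m
    unfold seqNorm at h
    have hw := hwpos m
    have hwe : TpAux.wt c K m = ((m : ℝ) / K) ^ (c * m) := rfl
    rw [hf₀def]
    rw [mul_one_div, le_div_iff₀ hw, hwe]
    nlinarith [norm_nonneg (a m)]
  -- Stage 1 : Dop a
  have hsg1 : ∀ n, Summable fun j => M * f₀ (n + 2 * j + 1) := fun n =>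
    (TpAux.sum_shift hsum₀ n 1).mul_left M
  have ht1 : ∀ n, ∑' j, M * f₀ (n + 2 * j + 1) ≤ M * C₀ * f₀ (n + 1) := by
    intro n
    rw [tsum_mul_left]
    calc M * ∑' j, f₀ (n + 2 * j + 1)
        = M * ∑' j, f₀ ((n + 1) + 2 * j) := by rw [TpAux.tsum_shift]
      _ ≤ M * (C₀ * f₀ (n + 1)) := mul_le_mul_of_nonneg_left (hC₀ (n + 1)) hM0
      _ = M * C₀ * f₀ (n + 1) := by ring
  obtain ⟨hS1, hD1⟩ := TpAux.Dop_est ha0 hsg1 ht1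
  -- Stage 2 : Hop (Dop a)
  have hD1' : ∀ m, ‖Dop a m‖ ≤ ((m:ℝ) + 2) * (M * C₀ * f₀ (m + 1)) := hD1
  have hH : ∀ m, ‖Hop (Dop a) m‖ ≤ M * C₀ * f₀ (m + 1) / ((m:ℝ) + 1) :=
    TpAux.Hop_est hD1' (fun m => by have := (hf₀pos (m+1)).le; positivity)
  have hH2 : ∀ m, ‖Hop (Dop a) m‖ ≤ M * C₀ * f₂ m := by
    intro m
    refine le_trans (hH m) (le_of_eq ?_)
    simp only [hf₀def, hf₂def]
    rw [mul_one_div, mul_one_div, div_div,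
      mul_comm (TpAux.wt c K (m + 1)) ((m:ℝ) + 1)]
  -- Stage 3 : Dop (Hop (Dop a))
  have hsg3 : ∀ n, Summable fun j => M * C₀ * f₂ (n + 2 * j + 1) := fun n =>
    (TpAux.sum_shift hsum₂ n 1).mul_left (M * C₀)
  have ht3 : ∀ n, ∑' j, M * C₀ * f₂ (n + 2 * j + 1) ≤ M * C₀ * C₂ * f₂ (n + 1) := by
    intro n
    rw [tsum_mul_left]
    calc M * C₀ * ∑' j, f₂ (n + 2 * j + 1)
        = M * C₀ * ∑' j, f₂ ((n + 1) + 2 * j) := by rw [TpAux.tsum_shift]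
      _ ≤ M * C₀ * (C₂ * f₂ (n + 1)) :=
          mul_le_mul_of_nonneg_left (hC₂ (n + 1)) (by positivity)
      _ = M * C₀ * C₂ * f₂ (n + 1) := by ring
  obtain ⟨hS3, hD3⟩ := TpAux.Dop_est hH2 hsg3 ht3
  have hB3 : ∀ m, ‖Dop (Hop (Dop a)) m‖ ≤ M * C₀ * C₂ * f₀ (m + 2) := by
    intro m
    refine le_trans (hD3 m) (le_of_eq ?_)
    have hw := hwpos (m + 2)
    have hm2 : ((m:ℝ) + 1 + 1) = (m:ℝ) + 2 := by ring
    simp only [hf₀def, hf₂def]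
    push_cast
    rw [hm2]
    have : m + 1 + 1 = m + 2 := by omega
    rw [this]
    field_simp
  -- Stage 4 : Dop (Dop (Hop (Dop a)))
  have hsg4 : ∀ n, Summable fun j => M * C₀ * C₂ * f₀ (n + 2 * j + 1 + 2) := fun n =>
    ((TpAux.sum_shift hsum₀ n 3).congr (fun j => congrArg f₀ (by omega))).mul_left (M * C₀ * C₂)
  have hsg4' : ∀ n, Summable fun j => M * C₀ * C₂ * f₀ ((n + 2 * j + 1) + 2) := hsg4
  have ht4 : ∀ n, ∑' j, M * C₀ * C₂ * f₀ ((n + 2 * j + 1) + 2)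
      ≤ M * C₀ * C₂ * C₀ * f₀ (n + 3) := by
    intro n
    rw [tsum_mul_left]
    calc M * C₀ * C₂ * ∑' j, f₀ (n + 2 * j + 1 + 2)
        = M * C₀ * C₂ * ∑' j, f₀ ((n + 3) + 2 * j) := by
          rw [show (∑' j, f₀ (n + 2 * j + 1 + 2)) = ∑' j, f₀ ((n + 3) + 2 * j) from
            tsum_congr fun j => by congr 1; omega]
      _ ≤ M * C₀ * C₂ * (C₀ * f₀ (n + 3)) :=
          mul_le_mul_of_nonneg_left (hC₀ (n + 3)) (by positivity)
      _ = M * C₀ * C₂ * C₀ * f₀ (n + 3) := by ring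
  obtain ⟨hS4, hD4⟩ := TpAux.Dop_est hB3 hsg4' ht4
  have hB4 : ∀ m, ‖Dop (Dop (Hop (Dop a))) m‖ ≤ M * C₀ * C₂ * C₀ * f₄ m := by
    intro m
    refine le_trans (hD4 m) (le_of_eq ?_)
    simp only [hf₀def, hf₄def]
    ring
  -- Stage 5 : Tp a
  have hsg5 : ∀ n, Summable fun j => M * C₀ * C₂ * C₀ * f₄ (n + 2 * j + 1) := fun n =>
    (TpAux.sum_shift hsum₄ n 1).mul_left (M * C₀ * C₂ * C₀)
  have ht5 : ∀ n, ∑' j, M * C₀ * C₂ * C₀ * f₄ (n + 2 * j + 1)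
      ≤ M * C₀ * C₂ * C₀ * C₄ * f₄ (n + 1) := by
    intro n
    rw [tsum_mul_left]
    calc M * C₀ * C₂ * C₀ * ∑' j, f₄ (n + 2 * j + 1)
        = M * C₀ * C₂ * C₀ * ∑' j, f₄ ((n + 1) + 2 * j) := by rw [TpAux.tsum_shift]
      _ ≤ M * C₀ * C₂ * C₀ * (C₄ * f₄ (n + 1)) :=
          mul_le_mul_of_nonneg_left (hC₄ (n + 1)) (by positivity)
      _ = M * C₀ * C₂ * C₀ * C₄ * f₄ (n + 1) := by ring
  obtain ⟨hS5, hD5⟩ := TpAux.Dop_est hB4 hsg5 ht5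
  refine ⟨⟨hS1, hS3, hS4, hS5⟩, fun n => ?_⟩
  -- final bound
  have hD5n : ‖Tp a n‖ ≤ ((n:ℝ) + 2) * (M * C₀ * C₂ * C₀ * C₄ * f₄ (n + 1)) := hD5 n
  have hwn := hwpos n
  have hwn4 := hwpos (n + 4)
  have habs0 : (0:ℝ) ≤ ‖Tp a n‖ := norm_nonneg _
  have hf41 : f₄ (n + 1) = ((n:ℝ) + 3) / TpAux.wt c K (n + 4) := by
    simp only [hf₄def]
    have h : n + 1 + 3 = n + 4 := by omega
    rw [h]
    push_cast
    ring_nf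
  have hfinal : seqNorm c K (Tp a) n ≤
      M * C₀ * C₂ * C₀ * C₄ *
        (((n:ℝ)+2) * ((n:ℝ)+3) * TpAux.wt c K n / TpAux.wt c K (n + 4)) := by
    unfold seqNorm
    have hwe : ((n : ℝ) / K) ^ (c * n) = TpAux.wt c K n := rfl
    rw [hwe]
    calc TpAux.wt c K n * ‖Tp a n‖
        ≤ TpAux.wt c K n * (((n:ℝ) + 2) * (M * C₀ * C₂ * C₀ * C₄ * f₄ (n + 1))) :=
          mul_le_mul_of_nonneg_left hD5n hwn.le
      _ = M * C₀ * C₂ * C₀ * C₄ *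
          (((n:ℝ)+2) * ((n:ℝ)+3) * TpAux.wt c K n / TpAux.wt c K (n + 4)) := by
          rw [hf41]; ring
  calc seqNorm c K (Tp a) n
      ≤ M * C₀ * C₂ * C₀ * C₄ *
        (((n:ℝ)+2) * ((n:ℝ)+3) * TpAux.wt c K n / TpAux.wt c K (n + 4)) := hfinal
    _ ≤ M * C₀ * C₂ * C₀ * C₄ * C₅ :=
        mul_le_mul_of_nonneg_left (hC₅ n) (by positivity)
    _ = C₀ * C₂ * C₀ * C₄ * C₅ * M := by ring
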